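/- For every integer n ≥ 1, the additive submonoid of ℤ × ℤ generated by the set {(n−k, k) : 0 ≤ k ≤ n} equals the set {(m, l) ∈ ℤ × ℤ : m ≥ 0, l ≥ 0, and n divides m + l}. -/

import Mathlib

/-- For every integer `n ≥ 1`, the additive submonoid of `ℤ × ℤ` generated by the set
`{(n − k, k) : 0 ≤ k ≤ n}` equals `{(m, l) : m ≥ 0, l ≥ 0, n ∣ m + l}`. -/
theorem weights_span_symPow (n : ℕ) (hn : 1 ≤ n) :
    (AddSubmonoid.closure {p : ℤ × ℤ | ∃ k : ℕ, k ≤ n ∧ p = ((n : ℤ) - (k : ℤ), (k : ℤ))} :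
        Set (ℤ × ℤ)) =
      {p : ℤ × ℤ | 0 ≤ p.1 ∧ 0 ≤ p.2 ∧ (n : ℤ) ∣ p.1 + p.2} := by
  set S : Set (ℤ × ℤ) := {p : ℤ × ℤ | ∃ k : ℕ, k ≤ n ∧ p = ((n : ℤ) - (k : ℤ), (k : ℤ))} with hS
  have key : ∀ q a b : ℕ, a + b = n * q → ((a : ℤ), (b : ℤ)) ∈ AddSubmonoid.closure S := by
    intro q
    induction q with
    | zero =>
      intro a b h
      have ha : a = 0 := by omega
      have hb : b = 0 := by omega
      subst ha hb
      exact (AddSubmonoid.closure S).zero_mem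
    | succ q ih =>
      intro a b h
      rw [Nat.mul_succ] at h
      set k := min b n with hk
      have hkn : k ≤ n := min_le_right _ _
      have hkb : k ≤ b := min_le_left _ _
      have h1 : n - k ≤ a := by
        have : 1 ≤ n := hn
        omega
      have hgen : ((n : ℤ) - (k : ℤ), (k : ℤ)) ∈ AddSubmonoid.closure S :=
        AddSubmonoid.subset_closure ⟨k, hkn, rfl⟩
      have hrest := ih (a - (n - k)) (b - k) (by omega)
      have eq : ((a : ℤ), (b : ℤ)) =
          ((n : ℤ) - (k : ℤ), (k : ℤ)) + (((a - (n - k) : ℕ) : ℤ), ((b - k : ℕ) : ℤ)) := by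
        simp only [Prod.mk_add_mk, Prod.mk.injEq]
        constructor <;> omega
      rw [eq]
      exact add_mem hgen hrest
  ext p
  simp only [SetLike.mem_coe, Set.mem_setOf_eq]
  constructor
  · intro hp
    induction hp using AddSubmonoid.closure_induction with
    | mem x hx =>
      obtain ⟨k, hk, rfl⟩ := hx
      refine ⟨by simp; omega, by positivity, ?_⟩
      simp
    | zero => simp
    | add x y hx hy ihx ihy =>
      obtain ⟨h1, h2, h3⟩ := ihx
      obtain ⟨h4, h5, h6⟩ := ihy
      refine ⟨by simpa using add_nonneg h1 h4, by simpa using add_nonneg h2 h5, ?_⟩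
      have := dvd_add h3 h6
      simpa [add_assoc, add_left_comm, add_comm] using this
  · rintro ⟨h1, h2, h3⟩
    obtain ⟨m, l⟩ := p
    simp only at h1 h2 h3
    lift m to ℕ using h1 with a
    lift l to ℕ using h2 with b
    have : (n : ℤ) ∣ ((a + b : ℕ) : ℤ) := by push_cast; exact h3
    obtain ⟨q, hq⟩ := (Int.natCast_dvd_natCast).mp this
    exact key q a b hq
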